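/- Let S be a finite nonempty set of points in the plane ℝ² and let p ∈ ℝ² be a point with p ∉ convexHull(S). Then there exists a point v ∈ S such that every point of S lies in the closed half-plane on one fixed side of the line through p and v; concretely, there exists v ∈ S such that for all x ∈ S, det(v − p, x − p) ≥ 0, where det(u, w) = u.x·w.y − u.y·w.x. -/

import Mathlib

theorem exists_tangent_point_of_not_mem_convexHull
    (S : Finset (EuclideanSpace ℝ (Fin 2))) (hS : S.Nonempty)
    (p : EuclideanSpace ℝ (Fin 2))
    (hp : p ∉ convexHull ℝ (S : Set (EuclideanSpace ℝ (Fin 2)))) :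
    ∃ v ∈ S, ∀ x ∈ S,
      (v 0 - p 0) * (x 1 - p 1) - (v 1 - p 1) * (x 0 - p 0) ≥ 0 := by
  -- separating hyperplane
  have hconv : Convex ℝ (convexHull ℝ (S : Set (EuclideanSpace ℝ (Fin 2)))) :=
    convex_convexHull ℝ _
  have hclosed : IsClosed (convexHull ℝ (S : Set (EuclideanSpace ℝ (Fin 2)))) :=
    (S.finite_toSet.isCompact_convexHull (𝕜 := ℝ)).isClosed
  obtain ⟨f, c, hfp, hfS⟩ := geometric_hahn_banach_point_closed hconv hclosed hp
  set u0 : ℝ := f (EuclideanSpace.single 0 1) with hu0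
  set u1 : ℝ := f (EuclideanSpace.single 1 1) with hu1
  have hf : ∀ y : EuclideanSpace ℝ (Fin 2), f y = y 0 * u0 + y 1 * u1 := by
    intro y
    have hy : y = y 0 • EuclideanSpace.single 0 (1 : ℝ)
        + y 1 • EuclideanSpace.single 1 (1 : ℝ) := by
      ext i; fin_cases i <;> simp [EuclideanSpace.single_apply]
    conv_lhs => rw [hy]
    simp [map_add, map_smul, smul_eq_mul, hu0, hu1]
  set a : EuclideanSpace ℝ (Fin 2) → ℝ := fun y => f y - f p with hadef
  set b : EuclideanSpace ℝ (Fin 2) → ℝ :=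
    fun y => u0 * (y 1 - p 1) - u1 * (y 0 - p 0) with hbdef
  have key : ∀ y, a y = u0 * (y 0 - p 0) + u1 * (y 1 - p 1) := by
    intro y; simp only [hadef, hf]; ring
  have ha : ∀ x ∈ S, 0 < a x := by
    intro x hx
    have h1 : c < f x := hfS x (subset_convexHull ℝ _ hx)
    simp only [hadef]; linarith
  have hu : u0 ≠ 0 ∨ u1 ≠ 0 := by
    by_contra h
    push_neg at h
    obtain ⟨x0, hx0⟩ := hS
    have h2 := ha x0 hx0
    rw [key, h.1, h.2] at h2
    simp at h2
  have hpos : 0 < u0 ^ 2 + u1 ^ 2 := by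
    rcases hu with h | h <;> positivity
  obtain ⟨v, hvS, hvmin⟩ := S.exists_min_image (fun x => b x / a x) hS
  refine ⟨v, hvS, fun x hx => ?_⟩
  have hav := ha v hvS
  have hax := ha x hx
  have hdiv : b v / a v ≤ b x / a x := hvmin x hx
  have hba : b v * a x ≤ b x * a v := by
    rwa [div_le_div_iff₀ hav hax] at hdiv
  have hid : (u0 ^ 2 + u1 ^ 2) *
      ((v 0 - p 0) * (x 1 - p 1) - (v 1 - p 1) * (x 0 - p 0))
      = a v * b x - b v * a x := by
    rw [key v, key x]; simp only [hbdef]; ring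
  nlinarith [hid, hba, hpos]
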